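/- For every positive integer ℓ, the sum of c(ℓ,k)/2^k over k from 1 to ℓ with k even equals ((2ℓ)! / (2^{2ℓ+1} ℓ!)) · ((2ℓ-2)/(2ℓ-1)). -/

import Mathlib

/-- Number of cycles of a permutation, counting fixed points as cycles of length 1. -/
def numCycles {n : ℕ} (σ : Equiv.Perm (Fin n)) : ℕ :=
  Multiset.card σ.cycleType + (n - σ.cycleType.sum)

/-- The unsigned Stirling number of the first kind: the number of permutations of
`ℓ` letters with exactly `k` cycles. -/
noncomputable def stirlingC (ℓ k : ℕ) : ℕ :=
  Nat.card {σ : Equiv.Perm (Fin ℓ) // numCycles σ = k}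

/-- The signed Stirling number of the first kind. -/
noncomputable def stirlingS (ℓ k : ℕ) : ℤ :=
  (-1) ^ (ℓ - k) * stirlingC ℓ k

open Equiv Equiv.Perm Finset

section Aux

variable {α : Type*} [Fintype α] [DecidableEq α]

/-- Number of cycles (counting fixed points), for a general fintype. -/
def ncyc (σ : Equiv.Perm α) : ℕ :=
  Multiset.card σ.cycleType + (Fintype.card α - σ.support.card)

lemma numCycles_eq_ncyc {n : ℕ} (σ : Equiv.Perm (Fin n)) : numCycles σ = ncyc σ := by
  rw [numCycles, ncyc, Equiv.Perm.sum_cycleType, Fintype.card_fin]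

lemma isCycle_swap_mul_of_fixed {c : Perm α} (hc : c.IsCycle) {a b : α}
    (hab : a ≠ b) (ha : c a = a) (hb : c b ≠ b) :
    IsCycle (swap a b * c) ∧ (swap a b * c).support = insert a c.support := by
  have hanot : a ∉ c.support := by simp [ha]
  have hbmem : b ∈ c.support := mem_support.2 hb
  set g := swap a b * c with hg
  have hga : g a = b := by simp [hg, ha]
  have hc_a : ∀ z, c z = a → z = a := fun z hz => c.injective (hz.trans ha.symm)
  have aux : ∀ n : ℕ, ∃ j : ℤ, (g ^ j) a = (c ^ n) b := by
    intro n
    induction n with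
    | zero => exact ⟨1, by simpa using hga⟩
    | succ n ih =>
      obtain ⟨j, hj⟩ := ih
      set z := (c ^ n) b with hzdef
      have hzsup : z ∈ c.support := pow_apply_mem_support.2 hbmem
      by_cases hcz : c z = b
      · exact ⟨1, by rw [zpow_one, hga, pow_succ', Equiv.Perm.mul_apply, ← hzdef, hcz]⟩
      · have hzne : z ≠ a := fun h => hanot (h ▸ hzsup)
        have hcza : c z ≠ a := fun h => hzne (hc_a z h)
        refine ⟨1 + j, ?_⟩
        have h1 : (g ^ (1 + j : ℤ)) a = g z := by
          rw [zpow_add, zpow_one, Equiv.Perm.mul_apply, hj]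
        rw [h1, hg, Equiv.Perm.mul_apply, swap_apply_of_ne_of_ne hcza hcz, pow_succ',
          Equiv.Perm.mul_apply, ← hzdef]
  constructor
  · refine ⟨a, by rw [hga]; exact hab.symm, fun y hy => ?_⟩
    rcases eq_or_ne y a with rfl | hya
    · exact ⟨0, rfl⟩
    have hysup : y ∈ c.support := by
      by_contra h
      have hcy : c y = y := notMem_support.1 h
      have hgy : g y = swap a b y := by rw [hg, Equiv.Perm.mul_apply, hcy]
      rw [hgy] at hy
      rcases (swap_apply_ne_self_iff.1 hy).2 with rfl | rfl
      · exact hya rfl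
      · exact hb hcy
    obtain ⟨i, hi⟩ := hc.exists_zpow_eq hb (mem_support.1 hysup)
    have hoc : (orderOf c : ℤ) ≠ 0 := by
      exact_mod_cast (orderOf_pos c).ne'
    set n := (i % (orderOf c : ℤ)).toNat with hn
    have hcn : (c ^ n) b = y := by
      rw [← hi, ← zpow_natCast, hn, Int.toNat_of_nonneg (Int.emod_nonneg i hoc),
        zpow_mod_orderOf]
    obtain ⟨j, hj⟩ := aux n
    exact ⟨j, by rw [hj, hcn]⟩
  · ext x
    simp only [Finset.mem_insert, mem_support]
    constructor
    · intro hx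
      rcases eq_or_ne x a with rfl | hxa
      · exact Or.inl rfl
      · refine Or.inr fun hcx => hx ?_
        have hxb : x ≠ b := fun h => hb (h ▸ hcx)
        rw [hg, Equiv.Perm.mul_apply, hcx, swap_apply_of_ne_of_ne hxa hxb]
    · rintro (rfl | hx)
      · rw [hga]; exact hab.symm
      · have hxa : x ≠ a := fun h => hanot (by simpa [h, mem_support] using hx)
        intro hgx
        rw [hg, Equiv.Perm.mul_apply] at hgx
        have hcxa : c x ≠ a := fun h => hxa (hc_a x h)
        rcases eq_or_ne (c x) b with h | h
        · rw [h, swap_apply_right] at hgx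
          exact hxa hgx.symm
        · rw [swap_apply_of_ne_of_ne hcxa h] at hgx
          exact hx hgx

lemma ncyc_swap_mul (f : Perm α) {a b : α} (hab : a ≠ b) (ha : f a = a) :
    ncyc (swap a b * f) + 1 = ncyc f := by
  have haf : a ∉ f.support := by simp [ha]
  by_cases hb : f b = b
  · have hbf : b ∉ f.support := by simp [hb]
    have hd : Equiv.Perm.Disjoint (swap a b) f := by
      intro x
      by_cases hx : x = a ∨ x = b
      · rcases hx with rfl | rfl
        · exact Or.inr ha
        · exact Or.inr hb
      · push_neg at hx
        exact Or.inl (swap_apply_of_ne_of_ne hx.1 hx.2)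
    have hct : Multiset.card ((swap a b * f).cycleType) = Multiset.card f.cycleType + 1 := by
      rw [hd.cycleType_mul, Multiset.card_add, (isCycle_swap hab).cycleType]
      simp [add_comm]
    have hsc : (swap a b * f).support.card = 2 + f.support.card := by
      rw [hd.card_support_mul, card_support_swap hab]
    have hle : f.support.card + 2 ≤ Fintype.card α := by
      have h := Finset.card_le_univ (insert a (insert b f.support))
      rw [Finset.card_insert_of_notMem (by simp [Finset.mem_insert, hab, haf]),
        Finset.card_insert_of_notMem hbf] at h
      omega
    simp only [ncyc, hct, hsc]
    omega
  · set c := f.cycleOf b with hcdef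
    have hc : IsCycle c := isCycle_cycleOf f hb
    have hca : c a = a := by
      rw [hcdef, cycleOf_apply]
      split <;> simp [ha]
    have hcb : c b ≠ b := by rw [hcdef, cycleOf_apply_self]; exact hb
    have hmem : c ∈ f.cycleFactorsFinset := cycleOf_mem_cycleFactorsFinset_iff.mpr (mem_support.2 hb)
    obtain ⟨hcyc', hsup'⟩ := isCycle_swap_mul_of_fixed hc hab hca hcb
    set d := f * c⁻¹ with hdd
    have hd : Equiv.Perm.Disjoint d c := disjoint_mul_inv_of_mem_cycleFactorsFinset hmem
    have hcainv : c⁻¹ a = a := by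
      conv_lhs => rw [← hca]
      exact Equiv.symm_apply_apply c a
    have hda : d a = a := by rw [hdd, Equiv.Perm.mul_apply, hcainv, ha]
    have hdb : d b = b := by
      rcases hd b with h | h
      · exact h
      · exact absurd h hcb
    have hcomm : Commute (swap a b) d := by
      refine Equiv.Perm.Disjoint.commute fun x => ?_
      by_cases hx : x = a ∨ x = b
      · rcases hx with rfl | rfl
        · exact Or.inr hda
        · exact Or.inr hdb
      · push_neg at hx
        exact Or.inl (swap_apply_of_ne_of_ne hx.1 hx.2)
    have hfd : f = d * c := by rw [hdd, inv_mul_cancel_right]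
    have hgd : swap a b * f = d * (swap a b * c) := by
      conv_lhs => rw [hfd]
      rw [← mul_assoc, hcomm.eq, mul_assoc]
    have hanotc : a ∉ c.support := by simp [hca]
    have hdisj2 : Equiv.Perm.Disjoint d (swap a b * c) := by
      rw [disjoint_iff_disjoint_support, hsup', Finset.disjoint_insert_right]
      refine ⟨by simp [hda], ?_⟩
      exact disjoint_iff_disjoint_support.mp hd
    have hct : (swap a b * f).cycleType
        = (f.cycleType - c.cycleType) + {c.support.card + 1} := by
      rw [hgd, hdisj2.cycleType_mul, hdd,
        cycleType_mul_inv_mem_cycleFactorsFinset_eq_sub hmem, hcyc'.cycleType, hsup',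
        Finset.card_insert_of_notMem hanotc]
    have hcardle := cycleType_le_of_mem_cycleFactorsFinset hmem
    have h2 : Multiset.card c.cycleType = 1 := card_cycleType_eq_one.mpr hc
    have h3 : 1 ≤ Multiset.card f.cycleType := by
      refine card_cycleType_pos.mpr fun h => hb ?_
      rw [h]; rfl
    have hcmle : Multiset.card c.cycleType ≤ Multiset.card f.cycleType :=
      Multiset.card_le_card hcardle
    have h1 : Multiset.card ((swap a b * f).cycleType) = Multiset.card f.cycleType := by
      rw [hct, Multiset.card_add, Multiset.card_sub hcardle, h2]
      simp only [Multiset.card_singleton]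
      omega
    have hsupf : f.support.card = d.support.card + c.support.card := by
      conv_lhs => rw [hfd]
      rw [hd.card_support_mul]
    have h4 : (swap a b * f).support.card = f.support.card + 1 := by
      rw [hgd, hdisj2.card_support_mul, hsup', Finset.card_insert_of_notMem hanotc, hsupf]
      omega
    have h5 : f.support.card + 1 ≤ Fintype.card α := by
      have h := Finset.card_le_univ (insert a f.support)
      rw [Finset.card_insert_of_notMem haf] at h
      omega
    simp only [ncyc, h1, h4]
    omega

/-- The equivalence `Fin n ≃ {x : Fin (n+1) // x ≠ 0}` by `succ`. -/
def succEquiv (n : ℕ) : Fin n ≃ {x : Fin (n + 1) // x ≠ 0} where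
  toFun x := ⟨x.succ, Fin.succ_ne_zero x⟩
  invFun y := (y : Fin (n + 1)).pred y.2
  left_inv x := by simp
  right_inv y := Subtype.ext (Fin.succ_pred _ y.2)

lemma decompose_zero_eq_extend {n : ℕ} (e : Perm (Fin n)) :
    Equiv.Perm.decomposeFin.symm (0, e) = e.extendDomain (succEquiv n) := by
  ext x
  refine Fin.cases ?_ ?_ x
  · rw [Equiv.Perm.decomposeFin_symm_apply_zero,
      Equiv.Perm.extendDomain_apply_not_subtype _ _ (by simp)]
  · intro i
    rw [Equiv.Perm.decomposeFin_symm_apply_succ, swap_self,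
      Equiv.Perm.extendDomain_apply_subtype e (succEquiv n) (Fin.succ_ne_zero i)]
    simp [succEquiv]

lemma ncyc_decompose_zero {n : ℕ} (e : Perm (Fin n)) :
    ncyc (Equiv.Perm.decomposeFin.symm (0, e)) = ncyc e + 1 := by
  have hsc : e.support.card ≤ n := by
    have h := Finset.card_le_univ e.support
    rwa [Fintype.card_fin] at h
  rw [decompose_zero_eq_extend]
  simp only [ncyc, Equiv.Perm.cycleType_extendDomain, Equiv.Perm.card_support_extend_domain,
    Fintype.card_fin]
  omega

lemma decomposeFin_symm_eq_swap_mul {n : ℕ} (p : Fin (n + 1)) (e : Perm (Fin n)) :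
    Equiv.Perm.decomposeFin.symm (p, e) = swap 0 p * Equiv.Perm.decomposeFin.symm (0, e) := by
  ext x
  refine Fin.cases ?_ ?_ x
  · simp
  · intro i
    rw [Equiv.Perm.mul_apply, Equiv.Perm.decomposeFin_symm_apply_succ,
      Equiv.Perm.decomposeFin_symm_apply_succ, swap_self]
    rfl

lemma ncyc_decomposeFin {n : ℕ} (p : Fin (n + 1)) (e : Perm (Fin n)) :
    ncyc (Equiv.Perm.decomposeFin.symm (p, e)) = ncyc e + if p = 0 then 1 else 0 := by
  rcases eq_or_ne p 0 with rfl | h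
  · rw [if_pos rfl, ncyc_decompose_zero]
  · rw [if_neg h, decomposeFin_symm_eq_swap_mul]
    have hfix : (Equiv.Perm.decomposeFin.symm (0, e)) 0 = 0 :=
      Equiv.Perm.decomposeFin_symm_apply_zero 0 e
    have := ncyc_swap_mul (Equiv.Perm.decomposeFin.symm (0, e)) (Ne.symm h) hfix
    have h0 := ncyc_decompose_zero e
    omega

end Aux

lemma sum_pow_ncyc (x : ℝ) (n : ℕ) :
    ∑ σ : Equiv.Perm (Fin n), x ^ ncyc σ = ∏ i ∈ Finset.range n, (x + i) := by
  induction n with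
  | zero =>
    rw [Finset.range_zero, Finset.prod_empty]
    haveI : Subsingleton (Equiv.Perm (Fin 0)) := ⟨fun a b => Equiv.ext fun y => y.elim0⟩
    have h : ∀ σ : Equiv.Perm (Fin 0), x ^ ncyc σ = 1 := by
      intro σ
      have : σ = 1 := Subsingleton.elim _ _
      subst this
      simp [ncyc]
    rw [Finset.sum_congr rfl fun σ _ => h σ, Finset.sum_const, Finset.card_univ,
      Fintype.card_perm]
    simp
  | succ n ih =>
    have key : ∀ σ : Equiv.Perm (Fin (n + 1)), x ^ ncyc σ =
        (fun q : Fin (n + 1) × Equiv.Perm (Fin n) =>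
          x ^ ncyc q.2 * (if q.1 = 0 then x else 1)) (Equiv.Perm.decomposeFin σ) := by
      intro σ
      have h := ncyc_decomposeFin (Equiv.Perm.decomposeFin σ).1 (Equiv.Perm.decomposeFin σ).2
      rw [Prod.mk.eta, Equiv.symm_apply_apply] at h
      rw [h, pow_add]
      by_cases hp : (Equiv.Perm.decomposeFin σ).1 = 0 <;> simp [hp]
    rw [Fintype.sum_equiv Equiv.Perm.decomposeFin (fun σ => x ^ ncyc σ)
      (fun q => x ^ ncyc q.2 * (if q.1 = 0 then x else 1)) key, Fintype.sum_prod_type]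
    have hinner : ∀ p : Fin (n + 1),
        (∑ e : Equiv.Perm (Fin n), x ^ ncyc e * (if p = 0 then x else 1))
          = (∑ e : Equiv.Perm (Fin n), x ^ ncyc e) * (if p = 0 then x else 1) :=
      fun p => (Finset.sum_mul _ _ _).symm
    rw [Finset.sum_congr rfl fun p _ => hinner p, ← Finset.mul_sum, ih]
    have hsum : (∑ p : Fin (n + 1), if p = 0 then x else (1 : ℝ)) = x + n := by
      rw [← Finset.add_sum_erase _ _ (Finset.mem_univ (0 : Fin (n + 1))), if_pos rfl]
      have : ∀ p ∈ Finset.univ.erase (0 : Fin (n + 1)),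
          (if p = 0 then x else (1 : ℝ)) = 1 := by
        intro p hp
        rw [if_neg (Finset.mem_erase.1 hp).1]
      rw [Finset.sum_congr rfl this, Finset.sum_const,
        Finset.card_erase_of_mem (Finset.mem_univ _), Finset.card_univ, Fintype.card_fin]
      simp
    rw [hsum, Finset.prod_range_succ]

lemma numCycles_mem_Icc {n : ℕ} (hn : 0 < n) (σ : Equiv.Perm (Fin n)) :
    numCycles σ ∈ Finset.Icc 1 n := by
  have h1 : σ.cycleType.sum = σ.support.card := Equiv.Perm.sum_cycleType σ
  have h2 : σ.support.card ≤ n := by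
    have h := Finset.card_le_univ σ.support
    rwa [Fintype.card_fin] at h
  have h3 : Multiset.card σ.cycleType ≤ σ.cycleType.sum := by
    have := Multiset.card_nsmul_le_sum (s := σ.cycleType) (a := 1)
      (fun x hx => (Equiv.Perm.one_lt_of_mem_cycleType hx).le)
    simpa using this
  have h4 : 1 ≤ numCycles σ := by
    rcases eq_or_ne σ 1 with rfl | hσ
    · simp only [numCycles, Equiv.Perm.cycleType_one]
      simpa using (show 1 ≤ n from hn)
    · have : 1 ≤ Multiset.card σ.cycleType := Equiv.Perm.card_cycleType_pos.mpr hσ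
      simp only [numCycles]
      omega
  simp only [Finset.mem_Icc]
  refine ⟨h4, ?_⟩
  simp only [numCycles]
  omega

lemma sum_stirling (ℓ : ℕ) (hℓ : 0 < ℓ) (x : ℝ) :
    ∑ k ∈ Finset.Icc 1 ℓ, (stirlingC ℓ k : ℝ) * x ^ k
      = ∑ σ : Equiv.Perm (Fin ℓ), x ^ numCycles σ := by
  rw [← Finset.sum_fiberwise_of_maps_to (s := Finset.univ) (t := Finset.Icc 1 ℓ) (g := fun σ => numCycles σ)
    (fun σ _ => numCycles_mem_Icc hℓ σ) (fun σ => x ^ numCycles σ)]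
  refine Finset.sum_congr rfl fun k hk => ?_
  rw [Finset.sum_congr rfl (fun σ hσ => by rw [(Finset.mem_filter.1 hσ).2]),
    Finset.sum_const, nsmul_eq_mul]
  congr 1
  rw [stirlingC, Nat.card_eq_fintype_card, Fintype.card_subtype]

lemma prod_half (n : ℕ) :
    ∏ i ∈ Finset.range n, ((1 / 2 : ℝ) + i)
      = (Nat.factorial (2 * n)) / (4 ^ n * Nat.factorial n) := by
  induction n with
  | zero => simp
  | succ n ih =>
    rw [Finset.prod_range_succ, ih]
    have hfac : Nat.factorial (2 * (n + 1)) = (2 * n + 2) * ((2 * n + 1) * Nat.factorial (2 * n)) := by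
      rw [show 2 * (n + 1) = (2 * n + 1) + 1 by ring, Nat.factorial_succ, Nat.factorial_succ]
    rw [hfac, Nat.factorial_succ]
    have h1 : (Nat.factorial n : ℝ) ≠ 0 := Nat.cast_ne_zero.mpr (Nat.factorial_ne_zero n)
    have h2 : (4 : ℝ) ^ n ≠ 0 := by positivity
    push_cast
    field_simp
    ring

lemma prod_neg_half (m : ℕ) :
    ∏ i ∈ Finset.range (m + 1), ((-1 / 2 : ℝ) + i)
      = -(1 / 2) * ((Nat.factorial (2 * m)) / (4 ^ m * Nat.factorial m)) := by
  rw [Finset.prod_range_succ']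
  have : ∀ i ∈ Finset.range m, ((-1 / 2 : ℝ) + (↑(i + 1) : ℝ)) = (1 / 2 : ℝ) + i := by
    intro i _
    push_cast
    ring
  rw [Finset.prod_congr rfl this, prod_half]
  push_cast
  ring

theorem stmt_8 (ℓ : ℕ) (hℓ : 0 < ℓ) :
    ∑ k ∈ (Finset.Icc 1 ℓ).filter (fun k => Even k), (stirlingC ℓ k : ℝ) / 2 ^ k
      = (Nat.factorial (2 * ℓ)) / (2 ^ (2 * ℓ + 1) * Nat.factorial ℓ) *
          ((2 * (ℓ : ℝ) - 2) / (2 * (ℓ : ℝ) - 1)) := by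
  obtain ⟨m, rfl⟩ : ∃ m, ℓ = m + 1 := ⟨ℓ - 1, (Nat.succ_pred_eq_of_pos hℓ).symm⟩
  set ℓ := m + 1 with hℓdef
  have hu : ∑ k ∈ Finset.Icc 1 ℓ, (stirlingC ℓ k : ℝ) * (1 / 2) ^ k
      = (Nat.factorial (2 * ℓ)) / (4 ^ ℓ * Nat.factorial ℓ) := by
    rw [sum_stirling ℓ hℓ]
    rw [show (∑ σ : Equiv.Perm (Fin ℓ), ((1:ℝ)/2) ^ numCycles σ)
        = ∑ σ : Equiv.Perm (Fin ℓ), ((1:ℝ)/2) ^ ncyc σ from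
      Finset.sum_congr rfl fun σ _ => by rw [numCycles_eq_ncyc]]
    rw [sum_pow_ncyc, prod_half]
  have hv : ∑ k ∈ Finset.Icc 1 ℓ, (stirlingC ℓ k : ℝ) * (-1 / 2) ^ k
      = -(1 / 2) * ((Nat.factorial (2 * m)) / (4 ^ m * Nat.factorial m)) := by
    rw [sum_stirling ℓ hℓ]
    rw [show (∑ σ : Equiv.Perm (Fin ℓ), ((-1:ℝ)/2) ^ numCycles σ)
        = ∑ σ : Equiv.Perm (Fin ℓ), ((-1:ℝ)/2) ^ ncyc σ from
      Finset.sum_congr rfl fun σ _ => by rw [numCycles_eq_ncyc]]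
    rw [sum_pow_ncyc, prod_neg_half]
  have heven : ∑ k ∈ (Finset.Icc 1 ℓ).filter (fun k => Even k), (stirlingC ℓ k : ℝ) / 2 ^ k
      = ((∑ k ∈ Finset.Icc 1 ℓ, (stirlingC ℓ k : ℝ) * (1 / 2) ^ k)
        + ∑ k ∈ Finset.Icc 1 ℓ, (stirlingC ℓ k : ℝ) * (-1 / 2) ^ k) / 2 := by
    rw [← Finset.sum_add_distrib]
    rw [Finset.sum_filter]
    rw [Finset.sum_div]
    refine Finset.sum_congr rfl fun k _ => ?_
    rcases Nat.even_or_odd k with hk | hk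
    · rw [if_pos hk]
      rw [show ((-1:ℝ)/2) ^ k = ((1:ℝ)/2) ^ k from by
        rw [show ((-1:ℝ)/2) = -(1/2) by ring, hk.neg_pow]]
      rw [one_div, inv_pow]
      ring
    · rw [if_neg (Nat.not_even_iff_odd.mpr hk)]
      rw [show ((-1:ℝ)/2) ^ k = -(((1:ℝ)/2) ^ k) from by
        rw [show ((-1:ℝ)/2) = -(1/2) by ring, hk.neg_pow]]
      ring
  rw [heven, hu, hv]
  have hfac1 : Nat.factorial (2 * ℓ) = (2 * m + 2) * ((2 * m + 1) * Nat.factorial (2 * m)) := by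
    rw [show 2 * ℓ = (2 * m + 1) + 1 by rw [hℓdef]; ring, Nat.factorial_succ, Nat.factorial_succ]
  have hfac2 : Nat.factorial ℓ = (m + 1) * Nat.factorial m := Nat.factorial_succ m
  have h1 : (Nat.factorial m : ℝ) ≠ 0 := Nat.cast_ne_zero.mpr (Nat.factorial_ne_zero m)
  have h2 : (4 : ℝ) ^ m ≠ 0 := by positivity
  have h3 : (2 * (m:ℝ) + 1) ≠ 0 := by positivity
  rw [hfac1, hfac2, hℓdef]
  push_cast
  have e1 : (2 : ℝ) ^ (2 * (m + 1) + 1) = 8 * 4 ^ m := by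
    rw [show 2 * (m + 1) + 1 = 2 * m + 3 by ring, pow_add, pow_mul]
    norm_num
    ring
  have e2 : (4 : ℝ) ^ (m + 1) = 4 * 4 ^ m := by rw [pow_succ]; ring
  have e3 : 2 * ((m : ℝ) + 1) - 1 = 2 * (m : ℝ) + 1 := by ring
  have e4 : 2 * ((m : ℝ) + 1) - 2 = 2 * (m : ℝ) := by ring
  rw [show (4:ℝ) ^ ℓ = (4:ℝ) ^ (m + 1) from rfl, e1, e2, e3, e4]
  field_simp
  ring
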